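/- Key functional inequality for the inductive step (with constant c = 1/2). Let n ≥ 1 and let A ⊆ {0,1}^n be a nonempty monotone set whose bottom slice A_0 is nonempty. Then for every f : A → ℝ, writing μ_1 := E_{x'∼A_1}[f_1(x')] and μ_0 := E_{x'∼A_0}[f_0(x')], one has (1/2)·a_1·(√(1−a) − √(1−a_1))·Var_{A_1}[f_1] + (1/2)·a_0·(√(1−a) − √(1−a_0))·Var_{A_0}[f_0] + (a_0/2)·E_{x'∼A_0}[(f_0(x') − f_1(x'))²] ≥ (1/2)·(a_1·a_0/(a_0 + a_1))·(1 − √(1−a))·(μ_1 − μ_0)². -/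

import Mathlib

set_option maxHeartbeats 1000000


/-- Expectation of `g` under the uniform measure on a finite subset `B` of the
hypercube `{0,1}^m`: `E_{x∼B}[g] = (1/|B|)·∑_{x∈B} g(x)`. -/
noncomputable def cubeExpect {m : ℕ} (B : Finset (Fin m → Bool))
    (g : (Fin m → Bool) → ℝ) : ℝ :=
  (∑ x ∈ B, g x) / B.card

/-- Variance of `g` under the uniform measure on `B`. -/
noncomputable def cubeVar {m : ℕ} (B : Finset (Fin m → Bool))
    (g : (Fin m → Bool) → ℝ) : ℝ :=
  cubeExpect B (fun x => (g x - cubeExpect B g) ^ 2)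

lemma cubeExpect_nonneg {m : ℕ} {B : Finset (Fin m → Bool)} {g : (Fin m → Bool) → ℝ}
    (hg : ∀ x ∈ B, 0 ≤ g x) : 0 ≤ cubeExpect B g :=
  div_nonneg (Finset.sum_nonneg hg) (Nat.cast_nonneg _)

lemma cubeVar_nonneg {m : ℕ} (B : Finset (Fin m → Bool)) (g : (Fin m → Bool) → ℝ) :
    0 ≤ cubeVar B g :=
  cubeExpect_nonneg fun x _ => sq_nonneg _

lemma card_mul_cubeExpect {m : ℕ} {B : Finset (Fin m → Bool)} (hB : B.Nonempty)
    (g : (Fin m → Bool) → ℝ) : (B.card : ℝ) * cubeExpect B g = ∑ x ∈ B, g x := by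
  have h : (B.card : ℝ) ≠ 0 := Nat.cast_ne_zero.mpr (Finset.card_ne_zero.mpr hB)
  rw [cubeExpect]; field_simp

lemma sum_sq_expand {m : ℕ} (B : Finset (Fin m → Bool)) (g : (Fin m → Bool) → ℝ) (d : ℝ) :
    ∑ x ∈ B, (g x - d) ^ 2
      = ∑ x ∈ B, g x ^ 2 - 2 * d * (∑ x ∈ B, g x) + B.card * d ^ 2 := by
  calc ∑ x ∈ B, (g x - d) ^ 2 = ∑ x ∈ B, (g x ^ 2 - 2 * d * g x + d ^ 2) :=
        Finset.sum_congr rfl fun x _ => by ring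
    _ = _ := by
        rw [Finset.sum_add_distrib, Finset.sum_sub_distrib, ← Finset.mul_sum,
          Finset.sum_const, nsmul_eq_mul]

lemma cubeExpect_sub_sq {m : ℕ} {B : Finset (Fin m → Bool)} (hB : B.Nonempty)
    (g : (Fin m → Bool) → ℝ) (c : ℝ) :
    cubeExpect B (fun x => (g x - c) ^ 2)
      = cubeVar B g + (cubeExpect B g - c) ^ 2 := by
  have hn : ((B.card : ℝ)) ≠ 0 := Nat.cast_ne_zero.mpr (Finset.card_ne_zero.mpr hB)
  have hsum : ∑ x ∈ B, g x = (B.card : ℝ) * cubeExpect B g := (card_mul_cubeExpect hB g).symm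
  simp only [cubeVar, cubeExpect]
  rw [sum_sq_expand, sum_sq_expand, hsum]
  rw [cubeExpect] at hsum ⊢
  field_simp
  ring

lemma cubeExpect_sub {m : ℕ} (B : Finset (Fin m → Bool)) (u v : (Fin m → Bool) → ℝ) :
    cubeExpect B (fun x => u x - v x) = cubeExpect B u - cubeExpect B v := by
  simp only [cubeExpect, Finset.sum_sub_distrib, sub_div]

lemma cubeExpect_sq_add {m : ℕ} (B : Finset (Fin m → Bool)) (u v : (Fin m → Bool) → ℝ) :
    cubeExpect B (fun x => (u x + v x) ^ 2)
      = cubeExpect B (fun x => u x ^ 2)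
        + (2 * cubeExpect B (fun x => u x * v x) + cubeExpect B (fun x => v x ^ 2)) := by
  have h : ∑ x ∈ B, (u x + v x) ^ 2
      = ∑ x ∈ B, u x ^ 2 + (2 * ∑ x ∈ B, (u x * v x) + ∑ x ∈ B, v x ^ 2) := by
    rw [Finset.mul_sum, ← Finset.sum_add_distrib, ← Finset.sum_add_distrib]
    exact Finset.sum_congr rfl fun x _ => by ring
  simp only [cubeExpect, h]; ring

lemma main_real (a0 a1 a s s0 s1 U X C V1 V0 D t r M : ℝ)
    (ha0 : 0 < a0) (h01 : a0 ≤ a1) (ha1 : a1 ≤ 1)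
    (haeq : a = (a0 + a1) / 2)
    (hs : s ^ 2 = 1 - a) (hs0 : s0 ^ 2 = 1 - a0) (hs1 : s1 ^ 2 = 1 - a1)
    (hsnn : 0 ≤ s) (hs1nn : 0 ≤ s1)
    (hs0le : s0 ≤ 1) (hsle : s ≤ 1)
    (hs1s : s1 ≤ s) (hss0 : s ≤ s0)
    (hU : 0 ≤ U) (hX : 0 ≤ X) (hV1 : 0 ≤ V1)
    (hCS : C ^ 2 ≤ U * X)
    (hD : D = X + r ^ 2)
    (hV0 : V0 = U + (2 * C + X))
    (hM : M ^ 2 = (t + r) ^ 2)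
    (hP5 : a0 < a1 → (a1 - a0) * (a1 * V1) ≥ (a1 - a0) * (a0 * (U + t ^ 2)) + (a0 * t) ^ 2)
    (hteq : a0 = a1 → t = 0) :
    (1 / 2) * a1 * (s - s1) * V1 + (1 / 2) * a0 * (s - s0) * V0 + (a0 / 2) * D
      ≥ (1 / 2) * (a1 * a0 / (a0 + a1)) * (1 - s) * M ^ 2 := by
  subst hD; subst hV0
  rw [hM]
  have hsum_pos : 0 < a0 + a1 := by linarith
  have h1s : 0 ≤ 1 - s := by linarith
  rcases eq_or_lt_of_le h01 with heq | hlt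
  · -- a0 = a1
    have ht0 : t = 0 := hteq heq
    have ha_eq0 : a = a0 := by rw [haeq, ← heq]; ring
    have hs0s : s0 = s := by
      have hz : (s0 - s) * (s0 + s) = 0 := by
        have hzz : s0 ^ 2 - s ^ 2 = 0 := by rw [hs0, hs, ha_eq0]; ring
        linear_combination hzz
      have hb : 0 ≤ s0 - s := by linarith
      have hmm : (s0 - s) * (s0 - s) ≤ (s0 - s) * (s0 + s) :=
        mul_le_mul_of_nonneg_left (by linarith) hb
      have h2 : (s0 - s) ^ 2 = 0 := le_antisymm (by nlinarith [hmm, hz]) (sq_nonneg _)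
      have := sq_eq_zero_iff.mp h2
      linarith
    have hcoef : a1 * a0 / (a0 + a1) = a0 / 2 := by
      rw [← heq, div_eq_iff (by positivity : a0 + a0 ≠ 0)]; ring
    rw [hcoef, hs0s, ht0]
    have h1 : (0:ℝ) ≤ a1 * ((s - s1) * V1) :=
      mul_nonneg (by linarith) (mul_nonneg (by linarith) hV1)
    have h2 : (0:ℝ) ≤ a0 * X := mul_nonneg ha0.le hX
    have h3 : (0:ℝ) ≤ (a0 * (1 + s)) * r ^ 2 :=
      mul_nonneg (mul_nonneg ha0.le (by linarith)) (sq_nonneg r)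
    linarith [h1, h2, h3]
  · -- a0 < a1
    have hδ : 0 < a1 - a0 := by linarith
    have ha_lt1 : a < 1 := by rw [haeq]; linarith
    have hsne : s ≠ 0 := by
      intro h; rw [h] at hs; simp at hs; linarith
    have hspos : 0 < s := lt_of_le_of_ne hsnn (Ne.symm hsne)
    have hss1pos : 0 < s + s1 := by linarith
    have hs0spos : 0 < s0 + s := by linarith
    have h2δs : (s - s1) * (s + s1) = (a1 - a0) / 2 := by linear_combination hs - hs1 - haeq
    have h2δs0 : (s0 - s) * (s0 + s) = (a1 - a0) / 2 := by linear_combination hs0 - hs + haeq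
    have hαpos : 0 < s - s1 := by nlinarith [h2δs, hδ, hss1pos]
    have hβnn : 0 ≤ s0 - s := by linarith
    set α := s - s1 with hαdef
    set β := s0 - s with hβdef
    -- (II):  α*β ≤ α - β
    have hδle : (a1 - a0) / 2 ≤ s0 - s1 := by
      have hs0s1 : (s0 - s1) * (s0 + s1) = a1 - a0 := by linear_combination hs0 - hs1
      nlinarith [mul_nonneg (by linarith : (0:ℝ) ≤ 2 - (s0 + s1)) (by linarith : (0:ℝ) ≤ s0 - s1)]
    have key1 : (α - β) * ((s + s1) * (s0 + s)) = ((a1 - a0) / 2) * (s0 - s1) := by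
      linear_combination (s0 + s) * h2δs - (s + s1) * h2δs0
    have key2 : (α * β) * ((s + s1) * (s0 + s)) = ((a1 - a0) / 2) ^ 2 := by
      linear_combination (β * (s0 + s)) * h2δs + ((a1 - a0) / 2) * h2δs0
    have hmono2 : (α * β) * ((s + s1) * (s0 + s)) ≤ (α - β) * ((s + s1) * (s0 + s)) := by
      rw [key1, key2]
      have := mul_le_mul_of_nonneg_left hδle (by linarith : (0:ℝ) ≤ (a1 - a0) / 2)
      linarith [this]
    have hII : α * β ≤ α - β :=
      le_of_mul_le_mul_right hmono2 (mul_pos hss1pos hs0spos)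
    -- Q1 : 0 ≤ (α-β)*U - 2*β*C + (1-β)*X
    have h1β : 0 ≤ 1 - β := by rw [hβdef]; linarith [hs0le, hsnn]
    have hαβ : 0 ≤ α - β := by linarith [hII, mul_nonneg hαpos.le hβnn]
    have hPSD : β ^ 2 ≤ (α - β) * (1 - β) := by linarith [hII]
    have hQ1 : 0 ≤ (α - β) * U - 2 * β * C + (1 - β) * X := by
      have c1 : (2 * β * C) ^ 2 ≤ 4 * β ^ 2 * (U * X) := by
        have := mul_le_mul_of_nonneg_left hCS (by positivity : (0:ℝ) ≤ 4 * β ^ 2)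
        linarith [this]
      have c2 : 4 * β ^ 2 * (U * X) ≤ 4 * ((α - β) * (1 - β)) * (U * X) := by
        have := mul_le_mul_of_nonneg_right hPSD (mul_nonneg hU hX)
        linarith [this]
      have c3 : 4 * ((α - β) * (1 - β)) * (U * X) ≤ ((α - β) * U + (1 - β) * X) ^ 2 := by
        linarith [sq_nonneg ((α - β) * U - (1 - β) * X)]
      have h4 : (2 * β * C) ^ 2 ≤ ((α - β) * U + (1 - β) * X) ^ 2 := by linarith
      have hwnn : 0 ≤ (α - β) * U + (1 - β) * X := by
        linarith [mul_nonneg hαβ hU, mul_nonneg h1β hX]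
      have h5 : 2 * β * C ≤ (α - β) * U + (1 - β) * X := le_of_sq_le_sq h4 hwnn
      linarith
    -- Q2' scaled
    have hsum_eq : a0 + a1 = 2 * (1 - s ^ 2) := by linarith [hs, haeq]
    have e9 : s * a1 = s - s * s1 ^ 2 := by linear_combination s * hs1
    have hkey : (1 - s) * (a1 + 2 * (s + s1)) ≤ a0 + a1 := by
      linarith [mul_nonneg h1s (sq_nonneg (1 - s1)), hsum_eq, hs1, e9]
    have ha1nn : (0:ℝ) ≤ a1 := by linarith
    have hqf : (0:ℝ) ≤ a1 * t ^ 2 + 2 * (s + s1) * r ^ 2 := by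
      have h1 := mul_nonneg ha1nn (sq_nonneg t)
      have h2 := mul_nonneg hss1pos.le (sq_nonneg r)
      linarith
    have hkey' : (0:ℝ) ≤ a0 + a1 - (1 - s) * (a1 + 2 * (s + s1)) := by linarith [hkey]
    have hQ2' : a1 * (1 - s) * (2 * (s + s1)) * (t + r) ^ 2
        ≤ (a0 + a1) * (a1 * t ^ 2 + 2 * (s + s1) * r ^ 2) := by
      linarith [mul_nonneg h1s (sq_nonneg (a1 * t - 2 * (s + s1) * r)),
        mul_nonneg hqf hkey']
    -- V1 bound
    have hP5' := hP5 hlt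
    have hq : (a1 - a0) * (a0 * U) + a0 * a1 * t ^ 2 ≤ (a1 - a0) * (a1 * V1) := by
      linarith [hP5']
    have hσα : (2 * (s + s1)) * α = a1 - a0 := by linear_combination 2 * h2δs
    have e7 : (2 * (s + s1)) * (a0 * α * U) = (a1 - a0) * (a0 * U) := by
      linear_combination (a0 * U) * hσα
    have e8 : (2 * (s + s1)) * (a1 * α * V1) = (a1 - a0) * (a1 * V1) := by
      linear_combination (a1 * V1) * hσα
    have hAbound : (2 * (s + s1)) * (a0 * α * U) + a0 * a1 * t ^ 2
        ≤ (2 * (s + s1)) * (a1 * α * V1) := by linarith [hq, e7, e8]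
    -- assemble
    have hMpos : 0 < (2 * (s + s1)) * (a0 + a1) := by positivity
    have penult : a1 * α * V1 - a0 * β * (U + (2 * C + X)) + a0 * (X + r ^ 2)
        ≥ (a1 * a0 / (a0 + a1)) * (1 - s) * (t + r) ^ 2 := by
      rw [ge_iff_le, ← mul_le_mul_iff_right₀ hMpos]
      have hrw : (2 * (s + s1)) * (a0 + a1) * ((a1 * a0 / (a0 + a1)) * (1 - s) * (t + r) ^ 2)
          = a0 * (a1 * (1 - s) * (2 * (s + s1)) * (t + r) ^ 2) := by
        field_simp
      rw [hrw]
      have h_1 := mul_le_mul_of_nonneg_left hAbound hsum_pos.le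
      have h_2 := mul_nonneg (by positivity : (0:ℝ) ≤ a0 * (a0 + a1) * (2 * (s + s1))) hQ1
      have h_3 := mul_le_mul_of_nonneg_left hQ2' ha0.le
      linarith [h_1, h_2, h_3]
    have hfin : a1 * α * V1 + a0 * (s - s0) * (U + (2 * C + X)) + a0 * (X + r ^ 2)
        ≥ (a1 * a0 / (a0 + a1)) * (1 - s) * (t + r) ^ 2 := by
      have : a0 * (s - s0) * (U + (2 * C + X)) = -(a0 * β * (U + (2 * C + X))) := by
        rw [hβdef]; ring
      linarith [penult, this]
    linarith [hfin]

/-- **Key functional inequality for the inductive step (constant `c = 1/2`).**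
Let `A ⊆ {0,1}^{m+1}` be a nonempty monotone set with nonempty bottom slice
`A₀`. Writing `μ₁ := E_{x'∼A₁}[f₁]` and `μ₀ := E_{x'∼A₀}[f₀]`, one has
`(1/2)·a₁·(√(1−a) − √(1−a₁))·Var_{A₁}[f₁]
 + (1/2)·a₀·(√(1−a) − √(1−a₀))·Var_{A₀}[f₀]
 + (a₀/2)·E_{x'∼A₀}[(f₀(x') − f₁(x'))²]
 ≥ (1/2)·(a₁·a₀/(a₀+a₁))·(1 − √(1−a))·(μ₁ − μ₀)²`. -/
theorem key_inductive_inequality {m : ℕ} (A : Finset (Fin (m + 1) → Bool))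
    (hA : A.Nonempty) (hmono : ∀ x ∈ A, ∀ y, x ≤ y → y ∈ A)
    (A0 A1 : Finset (Fin m → Bool))
    (hA0 : A0 = Finset.univ.filter fun x' => Fin.snoc x' false ∈ A)
    (hA1 : A1 = Finset.univ.filter fun x' => Fin.snoc x' true ∈ A)
    (hA0ne : A0.Nonempty)
    (a a0 a1 : ℝ)
    (ha : a = (A.card : ℝ) / 2 ^ (m + 1))
    (ha0 : a0 = (A0.card : ℝ) / 2 ^ m)
    (ha1 : a1 = (A1.card : ℝ) / 2 ^ m)
    (f : (Fin (m + 1) → Bool) → ℝ)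
    (μ0 μ1 : ℝ)
    (hμ0 : μ0 = cubeExpect A0 (fun x' => f (Fin.snoc x' false)))
    (hμ1 : μ1 = cubeExpect A1 (fun x' => f (Fin.snoc x' true))) :
    (1 / 2) * a1 * (Real.sqrt (1 - a) - Real.sqrt (1 - a1)) *
        cubeVar A1 (fun x' => f (Fin.snoc x' true)) +
      (1 / 2) * a0 * (Real.sqrt (1 - a) - Real.sqrt (1 - a0)) *
        cubeVar A0 (fun x' => f (Fin.snoc x' false)) +
      (a0 / 2) *
        cubeExpect A0 (fun x' => (f (Fin.snoc x' false) - f (Fin.snoc x' true)) ^ 2) ≥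
    (1 / 2) * (a1 * a0 / (a0 + a1)) * (1 - Real.sqrt (1 - a)) * (μ1 - μ0) ^ 2 := by
  classical
  set F0 : (Fin m → Bool) → ℝ := fun x' => f (Fin.snoc x' false) with hF0
  set F1 : (Fin m → Bool) → ℝ := fun x' => f (Fin.snoc x' true) with hF1
  have hDgoal : cubeExpect A0 (fun x' => (f (Fin.snoc x' false) - f (Fin.snoc x' true)) ^ 2)
      = cubeExpect A0 (fun x' => (F0 x' - F1 x') ^ 2) := rfl
  rw [hDgoal]
  -- A0 ⊆ A1
  have hsub : A0 ⊆ A1 := by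
    intro x' hx'
    rw [hA0, Finset.mem_filter] at hx'
    rw [hA1, Finset.mem_filter]
    refine ⟨Finset.mem_univ _, hmono _ hx'.2 _ ?_⟩
    intro i
    refine Fin.lastCases ?_ (fun j => ?_) i
    · simp [Fin.snoc_last]
    · simp [Fin.snoc_castSucc]
  -- injectivity of snoc with fixed last bit
  have hinj : ∀ b : Bool, Function.Injective (fun x' : Fin m → Bool => (Fin.snoc x' b : Fin (m+1) → Bool)) := by
    intro b x y h
    funext j
    have := congrFun h (Fin.castSucc j)
    simpa [Fin.snoc_castSucc] using this
  -- |A| = |A0| + |A1|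
  have hdisj : Disjoint (A0.image (fun x' => (Fin.snoc x' false : Fin (m+1) → Bool)))
      (A1.image (fun x' => (Fin.snoc x' true : Fin (m+1) → Bool))) := by
    rw [Finset.disjoint_left]
    rintro x hx0 hx1
    simp only [Finset.mem_image] at hx0 hx1
    obtain ⟨y, _, rfl⟩ := hx0
    obtain ⟨z, _, hz⟩ := hx1
    have := congrFun hz (Fin.last m)
    simp [Fin.snoc_last] at this
  have hA_eq : A = A0.image (fun x' => (Fin.snoc x' false : Fin (m+1) → Bool))
      ∪ A1.image (fun x' => (Fin.snoc x' true : Fin (m+1) → Bool)) := by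
    ext x
    simp only [Finset.mem_union, Finset.mem_image, hA0, hA1, Finset.mem_filter,
      Finset.mem_univ, true_and]
    constructor
    · intro hx
      rcases Bool.eq_false_or_eq_true (x (Fin.last m)) with hb | hb
      · right
        have hxe : Fin.snoc (Fin.init x) true = x := by
          rw [← hb]; exact Fin.snoc_init_self x
        exact ⟨Fin.init x, by rw [hxe]; exact hx, hxe⟩
      · left
        have hxe : Fin.snoc (Fin.init x) false = x := by
          rw [← hb]; exact Fin.snoc_init_self x
        exact ⟨Fin.init x, by rw [hxe]; exact hx, hxe⟩
    · rintro (⟨y, hy, rfl⟩ | ⟨y, hy, rfl⟩) <;> exact hy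
  have hcard : A.card = A0.card + A1.card := by
    rw [hA_eq, Finset.card_union_of_disjoint hdisj,
      Finset.card_image_of_injective _ (hinj false),
      Finset.card_image_of_injective _ (hinj true)]
  -- basic cardinality facts
  have hn0pos : (0:ℝ) < A0.card := by exact_mod_cast Finset.card_pos.mpr hA0ne
  have hA1ne : A1.Nonempty := hA0ne.mono hsub
  have hn1pos : (0:ℝ) < A1.card := by exact_mod_cast Finset.card_pos.mpr hA1ne
  have hn01 : (A0.card:ℝ) ≤ A1.card := by exact_mod_cast Finset.card_le_card hsub
  have hcu : Fintype.card (Fin m → Bool) = 2 ^ m := by simp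
  have hn1top : (A1.card:ℝ) ≤ 2 ^ m := by
    exact_mod_cast hcu ▸ (Finset.card_le_univ A1)
  have ha0pos : 0 < a0 := by rw [ha0]; exact div_pos hn0pos (by positivity)
  have h01 : a0 ≤ a1 := by
    rw [ha0, ha1]
    gcongr
  have ha1le1 : a1 ≤ 1 := by rw [ha1, div_le_one (by positivity)]; exact hn1top
  have haeq : a = (a0 + a1) / 2 := by
    rw [ha, ha0, ha1, hcard]
    push_cast
    rw [pow_succ]
    ring
    try ring
  -- expectation quantities
  set ν := cubeExpect A0 F1 with hν
  set r := μ0 - ν with hrd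
  set t := ν - μ1 with htd
  set U := cubeVar A0 F1 with hUd
  set X := cubeVar A0 (fun x' => F0 x' - F1 x') with hXd
  set C := cubeExpect A0 (fun x' => (F1 x' - ν) * (F0 x' - F1 x' - r)) with hCd
  have hEg : cubeExpect A0 (fun x' => F0 x' - F1 x') = r := by
    rw [cubeExpect_sub, ← hμ0, ← hν, hrd]
  have hu : U = cubeExpect A0 (fun x' => (F1 x' - ν) ^ 2) := by
    rw [hUd]; simp only [cubeVar]; rfl
  have hx : X = cubeExpect A0 (fun x' => (F0 x' - F1 x' - r) ^ 2) := by
    rw [hXd]; simp only [cubeVar]; simp only [hEg]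
  have hUnn : 0 ≤ U := by rw [hUd]; exact cubeVar_nonneg _ _
  have hXnn : 0 ≤ X := by rw [hXd]; exact cubeVar_nonneg _ _
  have hV1nn : 0 ≤ cubeVar A1 F1 := cubeVar_nonneg _ _
  -- D split
  have hD_split : cubeExpect A0 (fun x' => (F0 x' - F1 x') ^ 2) = X + r ^ 2 := by
    have h := cubeExpect_sub_sq hA0ne (fun x' => F0 x' - F1 x') 0
    simp only [sub_zero] at h
    rw [hEg] at h
    rw [hXd]
    exact h
  -- second moment of F1 over A0 around μ1
  have hS : cubeExpect A0 (fun x' => (F1 x' - μ1) ^ 2) = U + t ^ 2 := by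
    have h := cubeExpect_sub_sq hA0ne F1 μ1
    rw [← hν] at h
    rw [hUd, htd]
    exact h
  -- V0 split
  have hV0_split : cubeVar A0 F0 = U + (2 * C + X) := by
    have h := cubeExpect_sq_add A0 (fun x' => F1 x' - ν) (fun x' => F0 x' - F1 x' - r)
    have hL : (fun x' => ((F1 x' - ν) + (F0 x' - F1 x' - r)) ^ 2)
        = (fun x' => (F0 x' - μ0) ^ 2) := by
      funext x'; rw [hrd]; ring
    rw [hL] at h
    have hv0 : cubeVar A0 F0 = cubeExpect A0 (fun x' => (F0 x' - μ0) ^ 2) := by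
      simp only [cubeVar]; simp only [← hμ0]
    rw [hv0, hu, hx, hCd]
    exact h
  -- Cauchy-Schwarz : C^2 ≤ U * X
  have hCS : C ^ 2 ≤ U * X := by
    have hC_sum : (A0.card:ℝ) * C = ∑ x ∈ A0, (F1 x - ν) * (F0 x - F1 x - r) := by
      rw [hCd]; exact card_mul_cubeExpect hA0ne _
    have hU_sum : (A0.card:ℝ) * U = ∑ x ∈ A0, (F1 x - ν) ^ 2 := by
      rw [hu]; exact card_mul_cubeExpect hA0ne _
    have hX_sum : (A0.card:ℝ) * X = ∑ x ∈ A0, (F0 x - F1 x - r) ^ 2 := by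
      rw [hx]; exact card_mul_cubeExpect hA0ne _
    have cs := Finset.sum_mul_sq_le_sq_mul_sq A0 (fun x => F1 x - ν) (fun x => F0 x - F1 x - r)
    rw [← hC_sum, ← hU_sum, ← hX_sum] at cs
    have hn0sq : (0:ℝ) < (A0.card:ℝ) ^ 2 := pow_pos hn0pos 2
    have : C ^ 2 * ((A0.card:ℝ) ^ 2) ≤ U * X * ((A0.card:ℝ) ^ 2) := by linarith [cs]
    exact le_of_mul_le_mul_right this hn0sq
  -- P5 : variance splitting inequality
  have hP5 : a0 < a1 → (a1 - a0) * (a1 * cubeVar A1 F1)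
      ≥ (a1 - a0) * (a0 * (U + t ^ 2)) + (a0 * t) ^ 2 := by
    intro hlt
    have hv1e : cubeVar A1 F1 = cubeExpect A1 (fun x => (F1 x - μ1) ^ 2) := by
      simp only [cubeVar]; simp only [← hμ1]
    have hsum1 : ∑ x ∈ A1, (F1 x - μ1) ^ 2 = (A1.card:ℝ) * cubeVar A1 F1 := by
      rw [hv1e]; exact (card_mul_cubeExpect hA1ne _).symm
    have hS0sum : ∑ x ∈ A0, (F1 x - μ1) ^ 2 = (A0.card:ℝ) * (U + t ^ 2) := by
      rw [← hS]; exact (card_mul_cubeExpect hA0ne _).symm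
    have hsplit : ∑ x ∈ A1 \ A0, (F1 x - μ1) ^ 2 + ∑ x ∈ A0, (F1 x - μ1) ^ 2
        = ∑ x ∈ A1, (F1 x - μ1) ^ 2 := Finset.sum_sdiff hsub
    have hmean1 : ∑ x ∈ A1, (F1 x - μ1) = 0 := by
      rw [Finset.sum_sub_distrib, Finset.sum_const, nsmul_eq_mul, hμ1,
        card_mul_cubeExpect hA1ne F1]
      simp
    have hmean0 : ∑ x ∈ A0, (F1 x - μ1) = (A0.card:ℝ) * t := by
      have h2 := card_mul_cubeExpect hA0ne F1
      rw [← hν] at h2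
      rw [Finset.sum_sub_distrib, Finset.sum_const, nsmul_eq_mul, htd, ← h2]
      ring
    have hmeandiff : ∑ x ∈ A1 \ A0, (F1 x - μ1) = -((A0.card:ℝ) * t) := by
      have h := Finset.sum_sdiff (f := fun x => F1 x - μ1) hsub
      rw [hmean0, hmean1] at h
      linarith
    have hcarddiff : (((A1 \ A0).card : ℕ) : ℝ) = (A1.card:ℝ) - A0.card := by
      rw [Finset.card_sdiff_of_subset hsub, Nat.cast_sub (Finset.card_le_card hsub)]
    have cs2 := sq_sum_le_card_mul_sum_sq (s := A1 \ A0) (f := fun x => F1 x - μ1)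
    rw [hmeandiff, hcarddiff] at cs2
    have hSd : ∑ x ∈ A1 \ A0, (F1 x - μ1) ^ 2
        = (A1.card:ℝ) * cubeVar A1 F1 - (A0.card:ℝ) * (U + t ^ 2) := by
      linarith [hsplit, hsum1, hS0sum]
    have h1 : ((A0.card:ℝ) * t) ^ 2
        ≤ ((A1.card:ℝ) - A0.card) * (∑ x ∈ A1 \ A0, (F1 x - μ1) ^ 2) := by
      linarith [cs2]
    have h2 : ((A1.card:ℝ) - A0.card) * (∑ x ∈ A1 \ A0, (F1 x - μ1) ^ 2)
        = ((A1.card:ℝ) - A0.card) * ((A1.card:ℝ) * cubeVar A1 F1)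
          - ((A1.card:ℝ) - A0.card) * ((A0.card:ℝ) * (U + t ^ 2)) := by
      rw [hSd]; ring
    have hP5c : ((A1.card:ℝ) - A0.card) * ((A1.card:ℝ) * cubeVar A1 F1)
        ≥ ((A1.card:ℝ) - A0.card) * ((A0.card:ℝ) * (U + t ^ 2)) + ((A0.card:ℝ) * t) ^ 2 := by
      linarith [h1, h2]
    have hdiff : (a1 - a0) * (a1 * cubeVar A1 F1)
          - ((a1 - a0) * (a0 * (U + t ^ 2)) + (a0 * t) ^ 2)
        = (((A1.card:ℝ) - A0.card) * ((A1.card:ℝ) * cubeVar A1 F1)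
          - (((A1.card:ℝ) - A0.card) * ((A0.card:ℝ) * (U + t ^ 2)) + ((A0.card:ℝ) * t) ^ 2))
          / ((2:ℝ) ^ m) ^ 2 := by
      rw [ha0, ha1]; field_simp
    have hnn : (0:ℝ) ≤ (((A1.card:ℝ) - A0.card) * ((A1.card:ℝ) * cubeVar A1 F1)
          - (((A1.card:ℝ) - A0.card) * ((A0.card:ℝ) * (U + t ^ 2)) + ((A0.card:ℝ) * t) ^ 2))
          / ((2:ℝ) ^ m) ^ 2 :=
      div_nonneg (by linarith [hP5c]) (by positivity)
    have h3 : 0 ≤ (a1 - a0) * (a1 * cubeVar A1 F1)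
        - ((a1 - a0) * (a0 * (U + t ^ 2)) + (a0 * t) ^ 2) := by
      rw [hdiff]; exact hnn
    linarith [h3]
  -- t = 0 when the slices agree
  have hteq : a0 = a1 → t = 0 := by
    intro he
    have hreq : (A0.card:ℝ) = A1.card := by
      have h0 : (A0.card:ℝ) = a0 * 2 ^ m := by rw [ha0]; exact (div_mul_cancel₀ _ (pow_ne_zero _ two_ne_zero)).symm
      have h1 : (A1.card:ℝ) = a1 * 2 ^ m := by rw [ha1]; exact (div_mul_cancel₀ _ (pow_ne_zero _ two_ne_zero)).symm
      rw [h0, h1, he]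
    have hcardeq : A1.card ≤ A0.card := by exact_mod_cast le_of_eq hreq.symm
    have hAeq : A0 = A1 := Finset.eq_of_subset_of_card_le hsub hcardeq
    rw [htd, hν, hμ1, hAeq]
    exact sub_self _
  -- square root facts
  have ha_le1 : a ≤ 1 := by rw [haeq]; linarith
  have ha0le1 : a0 ≤ 1 := by linarith
  have hs : Real.sqrt (1 - a) ^ 2 = 1 - a := Real.sq_sqrt (by linarith)
  have hs0 : Real.sqrt (1 - a0) ^ 2 = 1 - a0 := Real.sq_sqrt (by linarith)
  have hs1 : Real.sqrt (1 - a1) ^ 2 = 1 - a1 := Real.sq_sqrt (by linarith)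
  have hsnn : 0 ≤ Real.sqrt (1 - a) := Real.sqrt_nonneg _
  have hs1nn : 0 ≤ Real.sqrt (1 - a1) := Real.sqrt_nonneg _
  have hs0le : Real.sqrt (1 - a0) ≤ 1 := by
    have h := Real.sqrt_le_sqrt (show 1 - a0 ≤ 1 by linarith)
    rwa [Real.sqrt_one] at h
  have hsle : Real.sqrt (1 - a) ≤ 1 := by
    have h := Real.sqrt_le_sqrt (show 1 - a ≤ 1 by linarith)
    rwa [Real.sqrt_one] at h
  have hs1s : Real.sqrt (1 - a1) ≤ Real.sqrt (1 - a) := by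
    apply Real.sqrt_le_sqrt; rw [haeq]; linarith
  have hss0 : Real.sqrt (1 - a) ≤ Real.sqrt (1 - a0) := by
    apply Real.sqrt_le_sqrt; rw [haeq]; linarith
  have hM : (μ1 - μ0) ^ 2 = (t + r) ^ 2 := by rw [htd, hrd]; ring
  exact main_real a0 a1 a (Real.sqrt (1 - a)) (Real.sqrt (1 - a0)) (Real.sqrt (1 - a1))
    U X C (cubeVar A1 F1) (cubeVar A0 F0) (cubeExpect A0 (fun x' => (F0 x' - F1 x') ^ 2))
    t r (μ1 - μ0) ha0pos h01 ha1le1 haeq hs hs0 hs1 hsnn hs1nn hs0le hsle hs1s hss0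
    hUnn hXnn hV1nn hCS hD_split hV0_split hM hP5 hteq
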